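/- The wheel graph W_6 (a 5-cycle plus a universal hub vertex, 6 vertices total) admits no circular vertex order satisfying the gap condition: for every cyclic order of its 6 vertices there exists a non-edge {x,y} for which no candidate gap exists. -/

import Mathlib

open SimpleGraph

/-- Clockwise distance from position `x` to position `v` in the cyclic order `ZMod n`. -/
def relpos {n : ℕ} (x v : ZMod n) : ℕ := (v - x).val

/-- `(v, v+1)` is a candidate gap for the non-edge `{x,y}` (arc taken clockwise from
`x` to `y`): the consecutive vertices `v, v+1` are non-adjacent, `[v, v+1] ⊆ [x, y]`,
and no edge of `G` joins a vertex of `[x, v]` to a vertex of `[v+1, y]`. -/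
def CandidateGap {n : ℕ} (G : SimpleGraph (ZMod n)) (x y v : ZMod n) : Prop :=
  ¬ G.Adj v (v + 1) ∧
  relpos x v < relpos x (v + 1) ∧
  relpos x (v + 1) ≤ relpos x y ∧
  ∀ u w : ZMod n, relpos x u ≤ relpos x v → relpos (v + 1) w ≤ relpos (v + 1) y →
    ¬ G.Adj u w

/-- The gap condition: every non-edge has a candidate gap (on one of its two arcs). -/
def GapCondition {n : ℕ} (G : SimpleGraph (ZMod n)) : Prop :=
  ∀ x y : ZMod n, x ≠ y → ¬ G.Adj x y →
    ∃ v : ZMod n, CandidateGap G x y v ∨ CandidateGap G y x v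

/-- Vertex `v` has the consecutive-neighbors property: its neighbors occupy
circularly consecutive positions `a, a+1, …, a+k-1`. -/
def CNP {n : ℕ} (G : SimpleGraph (ZMod n)) (v : ZMod n) : Prop :=
  ∃ (a : ZMod n) (k : ℕ), ∀ w : ZMod n,
    G.Adj v w ↔ ∃ i : ℕ, i < k ∧ w = a + (i : ZMod n)

/-- The wheel `W₆`: a 5-cycle `0,1,2,3,4` plus a universal hub `5`. -/
def wheelW6 : SimpleGraph (Fin 6) :=
  SimpleGraph.fromEdgeSet {s(0,1), s(1,2), s(2,3), s(3,4), s(4,0),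
    s(5,0), s(5,1), s(5,2), s(5,3), s(5,4)}

/-! ### Auxiliary material -/

/-- Fast boolean adjacency for `wheelW6`. -/
def adjB (a b : Fin 6) : Bool :=
  !(a == b) && ((a == 5) || (b == 5) || ((a.val + 1) % 5 == b.val) || ((b.val + 1) % 5 == a.val))

instance : DecidableRel wheelW6.Adj := fun a b => by
  unfold wheelW6
  rw [SimpleGraph.fromEdgeSet_adj]
  simp only [Set.mem_insert_iff, Set.mem_singleton_iff]
  infer_instance

lemma adj_iff : ∀ a b : Fin 6, wheelW6.Adj a b ↔ adjB a b = true := by decide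

instance instMapped (σ : Fin 6 ≃ ZMod 6) : DecidableRel (wheelW6.map σ.toEmbedding).Adj :=
  fun x y => decidable_of_iff (adjB (σ.symm x) (σ.symm y) = true) (by
    rw [← adj_iff]
    constructor
    · intro h; exact ⟨fun hxy => h.ne (by rw [hxy]), σ.symm x, σ.symm y, h, by simp, by simp⟩
    · rintro ⟨-, a, b, h, rfl, rfl⟩; simpa using h)

instance (σ : Fin 6 ≃ ZMod 6) (x y v : ZMod 6) :
    Decidable (CandidateGap (wheelW6.map σ.toEmbedding) x y v) := by
  unfold CandidateGap; infer_instance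

instance (σ : Fin 6 ≃ ZMod 6) : Decidable (GapCondition (wheelW6.map σ.toEmbedding)) := by
  unfold GapCondition; infer_instance

set_option maxRecDepth 100000 in
set_option maxHeartbeats 4000000 in
lemma key : ∀ σ : Fin 6 ≃ ZMod 6, σ 5 = 0 → ¬ GapCondition (wheelW6.map σ.toEmbedding) := by
  decide

/-! ### Rotation invariance of the gap condition -/

lemma relpos_add {n : ℕ} (x v c : ZMod n) : relpos (x + c) (v + c) = relpos x v := by
  simp [relpos, add_sub_add_right_eq_sub]

lemma map_addRight_adj {n : ℕ} (G : SimpleGraph (ZMod n)) (c a b : ZMod n) :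
    (G.map (Equiv.addRight c).toEmbedding).Adj (a + c) (b + c) ↔ G.Adj a b := by
  constructor
  · rintro ⟨-, p, q, h, hp, hq⟩
    simp only [Equiv.coe_toEmbedding, Equiv.coe_addRight] at hp hq
    rwa [add_left_injective c hp, add_left_injective c hq] at h
  · intro h
    exact ⟨fun hab => h.ne (add_right_cancel hab), a, b, h, rfl, rfl⟩

lemma candidateGap_shift {n : ℕ} (G : SimpleGraph (ZMod n)) (c x y v : ZMod n)
    (h : CandidateGap G x y v) :
    CandidateGap (G.map (Equiv.addRight c).toEmbedding) (x + c) (y + c) (v + c) := by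
  obtain ⟨h1, h2, h3, h4⟩ := h
  have hvc : v + c + 1 = (v + 1) + c := by ring
  refine ⟨?_, ?_, ?_, ?_⟩
  · rw [hvc, map_addRight_adj]; exact h1
  · rw [hvc, relpos_add, relpos_add]; exact h2
  · rw [hvc, relpos_add, relpos_add]; exact h3
  · intro u w hu hw
    have hu' : relpos x (u - c) ≤ relpos x v := by
      rw [← relpos_add x v c, ← relpos_add x (u - c) c, sub_add_cancel]; exact hu
    have hw' : relpos (v + 1) (w - c) ≤ relpos (v + 1) y := by
      rw [← relpos_add (v + 1) y c, ← relpos_add (v + 1) (w - c) c, sub_add_cancel, ← hvc]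
      exact hw
    have := h4 (u - c) (w - c) hu' hw'
    intro hadj
    apply this
    rw [← map_addRight_adj G c, sub_add_cancel, sub_add_cancel]
    exact hadj

lemma gapCondition_shift {n : ℕ} (G : SimpleGraph (ZMod n)) (c : ZMod n)
    (h : GapCondition G) : GapCondition (G.map (Equiv.addRight c).toEmbedding) := by
  intro x y hne hnadj
  obtain ⟨v, hv⟩ := h (x - c) (y - c)
    (fun hxy => hne (by rw [← sub_add_cancel x c, ← sub_add_cancel y c, hxy]))
    (fun hadj => hnadj (by
      rw [← sub_add_cancel x c, ← sub_add_cancel y c, map_addRight_adj]; exact hadj))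
  refine ⟨v + c, ?_⟩
  rcases hv with hv | hv
  · left
    have := candidateGap_shift G c _ _ _ hv
    rwa [sub_add_cancel, sub_add_cancel] at this
  · right
    have := candidateGap_shift G c _ _ _ hv
    rwa [sub_add_cancel, sub_add_cancel] at this

/-- No circular order of the vertices of `W₆` satisfies the gap condition. -/
theorem stmt_2 : ∀ σ : Fin 6 ≃ ZMod 6, ¬ GapCondition (wheelW6.map σ.toEmbedding) := by
  intro σ hgap
  set c : ZMod 6 := -σ 5 with hc
  set σ' : Fin 6 ≃ ZMod 6 := σ.trans (Equiv.addRight c) with hσ'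
  have h5 : σ' 5 = 0 := by simp [hσ', hc]
  apply key σ' h5
  have hmap : wheelW6.map σ'.toEmbedding
      = (wheelW6.map σ.toEmbedding).map (Equiv.addRight c).toEmbedding := by
    rw [SimpleGraph.map_map]
    rfl
  rw [hmap]
  exact gapCondition_shift _ c hgap
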